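/- Let m_φ > 0, σ > 0 and let f = ∑_{k=1}^m θ_k 1_{[0,t_k]} with θ_k ≥ 0, t_k > 0, a = max_k t_k. Then there exists exactly one bounded nonnegative Borel function v : [0,∞) → [0,∞) with compact support satisfying v(t) = (1/m_φ) ∫_0^∞ ( f(t+s) − (σ²/2) v(t+s)² ) ds for all t ≥ 0; moreover this solution vanishes outside [0,a]. -/

import Mathlib

set_option autoImplicit false
set_option maxHeartbeats 1000000

open MeasureTheory Filter Set

noncomputable section Stmt17Aux

/-- clamp to `[0, M]` -/
def clampTo (M x : ℝ) : ℝ := max 0 (min x M)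

lemma clampTo_nonneg (M x : ℝ) : 0 ≤ clampTo M x := le_max_left _ _

lemma clampTo_le (M x : ℝ) (hM : 0 ≤ M) : clampTo M x ≤ M :=
  max_le hM (min_le_right _ _)

lemma clampTo_of_mem (M x : ℝ) (h0 : 0 ≤ x) (hM : x ≤ M) : clampTo M x = x := by
  unfold clampTo
  rw [min_eq_left hM, max_eq_right h0]

lemma clampTo_of_nonpos (M x : ℝ) (hx : x ≤ 0) : clampTo M x = 0 := by
  unfold clampTo
  rcases le_total x M with h | h
  · rw [min_eq_left h, max_eq_left hx]
  · rw [min_eq_right h, max_eq_left (h.trans hx)]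

lemma clampTo_lipschitz (M x y : ℝ) : |clampTo M x - clampTo M y| ≤ |x - y| := by
  have h1 : |min x M - min y M| ≤ |x - y| := by
    have := abs_min_sub_min_le_max x M y M
    simpa using this
  calc |clampTo M x - clampTo M y| = |max (min x M) 0 - max (min y M) 0| := by
        unfold clampTo; rw [max_comm 0 (min x M), max_comm 0 (min y M)]
    _ ≤ |min x M - min y M| := abs_max_sub_max_le_abs _ _ _
    _ ≤ |x - y| := h1

lemma abs_sq_sub_sq_le (M x y : ℝ) (hM : 0 ≤ M) :
    |clampTo M x ^ 2 - clampTo M y ^ 2| ≤ 2 * M * |x - y| := by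
  have h := clampTo_lipschitz M x y
  have hx0 := clampTo_nonneg M x
  have hy0 := clampTo_nonneg M y
  have hxM := clampTo_le M x hM
  have hyM := clampTo_le M y hM
  have : clampTo M x ^ 2 - clampTo M y ^ 2
      = (clampTo M x + clampTo M y) * (clampTo M x - clampTo M y) := by ring
  rw [this, abs_mul]
  have h2 : |clampTo M x + clampTo M y| ≤ 2 * M := by
    rw [abs_of_nonneg (by linarith)]; linarith
  calc |clampTo M x + clampTo M y| * |clampTo M x - clampTo M y|
      ≤ (2 * M) * |x - y| := by
        apply mul_le_mul h2 h (abs_nonneg _) (by linarith)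

/-- bounded measurable functions are integrable on bounded intervals -/
lemma integrableOn_Ioc_of_bdd {g : ℝ → ℝ} (hg : Measurable g) {C : ℝ}
    (hC : ∀ u, |g u| ≤ C) (x y : ℝ) : IntegrableOn g (Ioc x y) := by
  apply Measure.integrableOn_of_bounded (M := C) measure_Ioc_lt_top.ne
    hg.aestronglyMeasurable
  exact ae_of_all _ fun u => by simpa [Real.norm_eq_abs] using hC u

lemma intervalIntegrable_of_bdd {g : ℝ → ℝ} (hg : Measurable g) {C : ℝ}
    (hC : ∀ u, |g u| ≤ C) (x y : ℝ) : IntervalIntegrable g volume x y := by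
  rw [intervalIntegrable_iff]
  exact integrableOn_Ioc_of_bdd hg hC _ _

/-- translation for the set integral over `Ioi 0` -/
lemma shift_integral (g : ℝ → ℝ) (t : ℝ) :
    ∫ s in Ioi (0 : ℝ), g (t + s) = ∫ u in Ioi t, g u := by
  rw [← integral_indicator measurableSet_Ioi, ← integral_indicator measurableSet_Ioi]
  have h : (fun s => (Ioi (0:ℝ)).indicator (fun s => g (t + s)) s)
      = fun s => (Ioi t).indicator g (t + s) := by
    funext s
    by_cases hs : s ∈ Ioi (0:ℝ)
    · rw [indicator_of_mem hs, indicator_of_mem (by simpa using hs.out)]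
    · rw [indicator_of_notMem hs, indicator_of_notMem (by
        simp only [mem_Ioi] at hs ⊢; linarith [hs])]
  rw [h, MeasureTheory.integral_add_left_eq_self]

/-- cut off the integral at `a` when `g` vanishes beyond `a` -/
lemma cutoff_integral {g : ℝ → ℝ} {a t : ℝ} (hta : t ≤ a)
    (hga : ∀ u, a < u → g u = 0) (hint : IntegrableOn g (Ioc t a)) :
    ∫ u in Ioi t, g u = ∫ u in t..a, g u := by
  rw [intervalIntegral.integral_of_le hta, ← Ioc_union_Ioi_eq_Ioi hta,
    setIntegral_union (Ioc_disjoint_Ioi le_rfl) measurableSet_Ioi hint ?hi]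
  case hi =>
    apply (integrableOn_congr_fun (g := fun _ => (0:ℝ)) ?_ measurableSet_Ioi).mpr
    · exact integrableOn_zero
    · intro u hu; exact hga u hu
  have h0 : ∫ u in Ioi a, g u = 0 := by
    rw [setIntegral_congr_fun measurableSet_Ioi (fun u hu => hga u hu)]
    simp
  rw [h0, add_zero]

/-- the integral over `Ioi t` of a function vanishing beyond `a` is 0 when `a ≤ t` -/
lemma integral_Ioi_eq_zero {g : ℝ → ℝ} {a t : ℝ} (hta : a ≤ t)
    (hga : ∀ u, a < u → g u = 0) : ∫ u in Ioi t, g u = 0 := by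
  rw [setIntegral_congr_fun measurableSet_Ioi (fun u hu => hga u (lt_of_le_of_lt hta hu))]
  simp


/-- truncation of `t` into `[0,a]` -/
def tau (a t : ℝ) : ℝ := min (max t 0) a

lemma tau_mem {a : ℝ} (ha : 0 ≤ a) (t : ℝ) : tau a t ∈ Icc 0 a :=
  ⟨le_min (le_max_right _ _) ha, min_le_right _ _⟩

lemma tau_eq {a t : ℝ} (ht : t ∈ Icc 0 a) : tau a t = t := by
  unfold tau; rw [max_eq_left ht.1, min_eq_left ht.2]

lemma tau_idem {a : ℝ} (ha : 0 ≤ a) (t : ℝ) : tau a (tau a t) = tau a t :=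
  tau_eq (tau_mem ha t)

lemma tau_eq_right {a t : ℝ} (ha : 0 ≤ a) (ht : a ≤ t) : tau a t = a := by
  unfold tau
  rw [max_eq_left (ha.trans ht), min_eq_right ht]

lemma continuous_tau (a : ℝ) : Continuous (tau a) :=
  (continuous_id.max continuous_const).min continuous_const

/-- integrand of the fixed point operator -/
def Gfun (c M : ℝ) (f v : ℝ → ℝ) (u : ℝ) : ℝ := f u - c * (clampTo M (v u)) ^ 2

end Stmt17Aux

section Master

open BoundedContinuousFunction

theorem stmt17_master (mφ c a B : ℝ) (hmφ : 0 < mφ) (hc : 0 < c) (ha : 0 < a) (hB : 0 ≤ B)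
    (f : ℝ → ℝ) (hfm : Measurable f) (hf0 : ∀ u, 0 ≤ f u) (hfB : ∀ u, f u ≤ B)
    (hfa : ∀ u, a < u → f u = 0) :
    (∃! v : ℝ → ℝ,
      Measurable v ∧ (∀ t, 0 ≤ v t) ∧ (∃ M, ∀ t, v t ≤ M) ∧
      (∃ b : ℝ, ∀ t, b < t → v t = 0) ∧ (∀ t < (0 : ℝ), v t = 0) ∧
      (∀ t ≥ (0 : ℝ), v t = (1 / mφ) * ∫ s in Set.Ioi (0 : ℝ),
        (f (t + s) - c * v (t + s) ^ 2))) ∧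
    (∀ v : ℝ → ℝ,
      (Measurable v ∧ (∀ t, 0 ≤ v t) ∧ (∃ M, ∀ t, v t ≤ M) ∧
      (∃ b : ℝ, ∀ t, b < t → v t = 0) ∧ (∀ t < (0 : ℝ), v t = 0) ∧
      (∀ t ≥ (0 : ℝ), v t = (1 / mφ) * ∫ s in Set.Ioi (0 : ℝ),
        (f (t + s) - c * v (t + s) ^ 2))) →
      ∀ t, a < t → v t = 0) := by
  have habsf : ∀ u, |f u| ≤ B := fun u => by
    rw [abs_of_nonneg (hf0 u)]; exact hfB u
  -- Part 2 : every solution vanishes beyond `a`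
  have vanish : ∀ v : ℝ → ℝ,
      (Measurable v ∧ (∀ t, 0 ≤ v t) ∧ (∃ M, ∀ t, v t ≤ M) ∧
      (∃ b : ℝ, ∀ t, b < t → v t = 0) ∧ (∀ t < (0 : ℝ), v t = 0) ∧
      (∀ t ≥ (0 : ℝ), v t = (1 / mφ) * ∫ s in Set.Ioi (0 : ℝ),
        (f (t + s) - c * v (t + s) ^ 2))) →
      ∀ t, a < t → v t = 0 := by
    rintro v ⟨hvm, hv0, ⟨M', hvM⟩, ⟨b, hvb⟩, hvneg, heq⟩ t hat
    have ht0 : (0:ℝ) ≤ t := ha.le.trans hat.le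
    have hval := heq t ht0
    have hshift : ∫ s in Ioi (0:ℝ), (f (t+s) - c * v (t+s) ^ 2)
        = ∫ u in Ioi t, (f u - c * v u ^ 2) :=
      shift_integral (fun u => f u - c * v u ^ 2) t
    rw [hshift] at hval
    have h1 : ∫ u in Ioi t, (f u - c * v u ^ 2)
        = ∫ u in Ioi t, (0 - c * v u ^ 2) :=
      setIntegral_congr_fun measurableSet_Ioi (fun u hu => by rw [hfa u (hat.trans hu)])
    have h2 : ∫ u in Ioi t, (0 - c * v u ^ 2) ≤ 0 := by
      apply integral_nonpos
      intro u
      simp only [Pi.zero_apply]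
      nlinarith [sq_nonneg (v u), hc.le]
    have h3 : v t ≤ 0 := by
      rw [hval, h1]
      exact mul_nonpos_of_nonneg_of_nonpos (by positivity) h2
    exact le_antisymm h3 (hv0 t)
  -- constants
  set M : ℝ := B * a / mφ with hMdef
  have hM : 0 ≤ M := by positivity
  set C0 : ℝ := B + c * M ^ 2 with hC0def
  have hC0 : 0 ≤ C0 := by positivity
  set L : ℝ := 2 * c * M / mφ with hLdef
  have hL : 0 ≤ L := by positivity
  -- basic facts about the integrand
  have hGmeas : ∀ v : ℝ → ℝ, Measurable v → Measurable (Gfun c M f v) := by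
    intro v hv
    unfold Gfun clampTo
    exact hfm.sub ((measurable_const.max (hv.min measurable_const)).pow
      measurable_const |>.const_mul c)
  have hGbdd : ∀ (v : ℝ → ℝ) (u : ℝ), |Gfun c M f v u| ≤ C0 := by
    intro v u
    unfold Gfun
    have h1 := habsf u
    have h2 := clampTo_nonneg M (v u)
    have h3 := clampTo_le M (v u) hM
    have habs : |f u - c * clampTo M (v u) ^ 2| ≤ |f u| + c * clampTo M (v u) ^ 2 := by
      rw [abs_sub_comm, abs_le]
      constructor <;> nlinarith [abs_nonneg (f u), le_abs_self (f u), neg_abs_le (f u)]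
    have h4 : c * clampTo M (v u) ^ 2 ≤ c * M ^ 2 :=
      mul_le_mul_of_nonneg_left (pow_le_pow_left₀ h2 h3 2) hc.le
    calc |f u - c * clampTo M (v u) ^ 2| ≤ |f u| + c * clampTo M (v u) ^ 2 := habs
      _ ≤ B + c * M ^ 2 := by linarith
  have hGint : ∀ v : ℝ → ℝ, Measurable v → ∀ x y,
      IntervalIntegrable (Gfun c M f v) volume x y := fun v hv =>
    intervalIntegrable_of_bdd (hGmeas v hv) (hGbdd v)
  -- construction of the operator on bounded continuous functions
  have hcont' : ∀ (g : ℝ → ℝ) (C : ℝ), Measurable g → (∀ u, |g u| ≤ C) →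
      Continuous (fun t => (1/mφ) * ∫ u in tau a t..a, g u) := by
    intro g C hgm hgC
    have hint : ∀ x y, IntervalIntegrable g volume x y := intervalIntegrable_of_bdd hgm hgC
    have hprim : Continuous fun b => ∫ u in a..b, g u :=
      intervalIntegral.continuous_primitive hint a
    have h2 : Continuous fun t => ∫ u in tau a t..a, g u := by
      have heq : (fun t => ∫ u in tau a t..a, g u)
          = fun t => -∫ u in a..tau a t, g u :=
        funext fun t => intervalIntegral.integral_symm _ _
      rw [heq]
      exact (hprim.comp (continuous_tau a)).neg
    exact continuous_const.mul h2
  have hbd' : ∀ (g : ℝ → ℝ) (C : ℝ), (∀ u, |g u| ≤ C) →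
      ∀ t, ‖(1/mφ) * ∫ u in tau a t..a, g u‖ ≤ (1/mφ) * (C * a) := by
    intro g C hgC t
    have htau0 := tau_mem ha.le t
    have h1 : ‖∫ u in tau a t..a, g u‖ ≤ C * |a - tau a t| :=
      intervalIntegral.norm_integral_le_of_norm_le_const fun u _ => by
        rw [Real.norm_eq_abs]; exact hgC u
    have hC : 0 ≤ C := (abs_nonneg _).trans (hgC 0)
    have h2 : |a - tau a t| ≤ a := by
      rw [abs_of_nonneg (by linarith [htau0.2])]; linarith [htau0.1]
    rw [norm_mul, Real.norm_eq_abs, Real.norm_eq_abs, abs_of_pos (by positivity : (0:ℝ) < 1/mφ)]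
    have : |∫ u in tau a t..a, g u| ≤ C * a := by
      calc |∫ u in tau a t..a, g u| ≤ C * |a - tau a t| := h1
        _ ≤ C * a := by nlinarith
    nlinarith [abs_nonneg (∫ u in tau a t..a, g u), one_div_pos.mpr hmφ]
  -- the operator
  let TT : (ℝ →ᵇ ℝ) → (ℝ →ᵇ ℝ) := fun v =>
    BoundedContinuousFunction.ofNormedAddCommGroup
      (fun t => (1/mφ) * ∫ u in tau a t..a, Gfun c M f (⇑v) u)
      (hcont' _ C0 (hGmeas _ v.continuous.measurable) (hGbdd _))
      ((1/mφ) * (C0 * a)) (hbd' _ C0 (hGbdd _))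
  have hTTapp : ∀ (v : ℝ →ᵇ ℝ) (t : ℝ),
      TT v t = (1/mφ) * ∫ u in tau a t..a, Gfun c M f (⇑v) u := fun v t => rfl
  have hTTtau : ∀ (v : ℝ →ᵇ ℝ) (t : ℝ), TT v t = TT v (tau a t) := by
    intro v t; rw [hTTapp, hTTapp, tau_idem ha.le]
  -- Picard iterate estimate
  have key : ∀ n : ℕ, ∀ v w : ℝ →ᵇ ℝ, ∀ t, t ∈ Icc 0 a →
      |(TT^[n] v) t - (TT^[n] w) t|
        ≤ L ^ n * (a - t) ^ n / n.factorial * dist v w := by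
    intro n
    induction n with
    | zero =>
      intro v w t ht
      simp only [Function.iterate_zero, id_eq, pow_zero, Nat.factorial_zero,
        Nat.cast_one, one_mul, mul_one, div_one]
      rw [← Real.dist_eq]
      exact BoundedContinuousFunction.dist_coe_le_dist t
    | succ n ih =>
      intro v w t ht
      rw [Function.iterate_succ_apply', Function.iterate_succ_apply']
      set x := TT^[n] v with hxdef
      set y := TT^[n] w with hydef
      rw [hTTapp, hTTapp, tau_eq ht, ← mul_sub]
      have hintx := hGint x x.continuous.measurable t a
      have hinty := hGint y y.continuous.measurable t a
      rw [← intervalIntegral.integral_sub hintx hinty, abs_mul,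
        abs_of_pos (by positivity : (0:ℝ) < 1/mφ)]
      set d := dist v w with hddef
      have hd : 0 ≤ d := dist_nonneg
      have hIbound : |∫ u in t..a, (Gfun c M f (⇑x) u - Gfun c M f (⇑y) u)|
          ≤ |∫ u in t..a, 2*c*M * (L ^ n * (a - u) ^ n / n.factorial * d)| := by
        rw [← Real.norm_eq_abs, ← Real.norm_eq_abs]
        refine (intervalIntegral.norm_integral_le_of_norm_le ht.2 ?_ ?_).trans (Real.le_norm_self _)
        · apply ae_of_all
          intro u hu
          have hu' : u ∈ Icc 0 a := ⟨ht.1.trans hu.1.le, hu.2⟩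
          have hih := ih v w u hu'
          have hGdiff : Gfun c M f (⇑x) u - Gfun c M f (⇑y) u
              = c * (clampTo M (y u) ^ 2 - clampTo M (x u) ^ 2) := by
            unfold Gfun; ring
          rw [Real.norm_eq_abs, hGdiff, abs_mul, abs_of_pos hc]
          have habs2 := abs_sq_sub_sq_le M (y u) (x u) hM
          calc c * |clampTo M (y u) ^ 2 - clampTo M (x u) ^ 2|
              ≤ c * (2 * M * |x u - y u|) := by
                rw [abs_sub_comm (x u) (y u)]
                exact mul_le_mul_of_nonneg_left habs2 hc.le
            _ ≤ 2*c*M * (L ^ n * (a - u) ^ n / n.factorial * d) := by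
                nlinarith [abs_nonneg (x u - y u), mul_le_mul_of_nonneg_left hih
                  (by positivity : (0:ℝ) ≤ 2*c*M)]
        · apply Continuous.intervalIntegrable
          have h1 : Continuous fun u : ℝ => (a - u) ^ n :=
            (continuous_const.sub continuous_id).pow n
          have h2 : Continuous fun u : ℝ =>
              2*c*M * (L ^ n * (a - u) ^ n / ↑n.factorial * d) := by
            have : (fun u : ℝ => 2*c*M * (L ^ n * (a - u) ^ n / ↑n.factorial * d))
                = fun u : ℝ => (2*c*M * L ^ n / ↑n.factorial * d) * (a - u) ^ n := by
              funext u; ring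
            rw [this]
            exact continuous_const.mul h1
          exact h2
      have hIval : ∫ u in t..a, 2*c*M * (L ^ n * (a - u) ^ n / n.factorial * d)
          = 2*c*M * (L ^ n / n.factorial * d) * ((a - t) ^ (n+1) / (n+1)) := by
        have hfe : (fun u => 2*c*M * (L ^ n * (a - u) ^ n / n.factorial * d))
            = fun u => (2*c*M * (L ^ n / n.factorial * d)) * (a - u) ^ n := by
          funext u; ring
        rw [hfe, intervalIntegral.integral_const_mul]
        have hcomp : (∫ u in t..a, (a - u) ^ n) = ∫ u in (a-a)..(a-t), u ^ n :=
          intervalIntegral.integral_comp_sub_left (fun s => s ^ n) a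
        rw [hcomp, sub_self, integral_pow]
        ring_nf
      rw [hIval] at hIbound
      have hIabs : |2*c*M * (L ^ n / n.factorial * d) * ((a - t) ^ (n+1) / (n+1))|
          = 2*c*M * (L ^ n / n.factorial * d) * ((a - t) ^ (n+1) / (n+1)) := by
        apply abs_of_nonneg
        have hat : (0:ℝ) ≤ a - t := by linarith [ht.2]
        positivity
      rw [hIabs] at hIbound
      calc 1/mφ * |∫ u in t..a, (Gfun c M f (⇑x) u - Gfun c M f (⇑y) u)|
          ≤ 1/mφ * (2*c*M * (L ^ n / n.factorial * d) * ((a - t) ^ (n+1) / (n+1))) :=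
            mul_le_mul_of_nonneg_left hIbound (by positivity)
        _ = L ^ (n+1) * (a - t) ^ (n+1) / (n+1).factorial * d := by
            rw [hLdef, pow_succ, Nat.factorial_succ]
            have h1 : (n.factorial : ℝ) ≠ 0 := Nat.cast_ne_zero.mpr n.factorial_ne_zero
            have h2 : ((n:ℝ) + 1) ≠ 0 := by positivity
            push_cast
            field_simp
            ring_nf
            simp [hmφ.ne']
  -- distance bound for iterates
  have keydist : ∀ n : ℕ, 1 ≤ n → ∀ v w : ℝ →ᵇ ℝ,
      dist (TT^[n] v) (TT^[n] w) ≤ (L*a) ^ n / n.factorial * dist v w := by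
    intro n hn v w
    have hcoef : (0:ℝ) ≤ (L*a) ^ n / n.factorial * dist v w := by positivity
    rw [BoundedContinuousFunction.dist_le hcoef]
    intro t
    obtain ⟨m, rfl⟩ : ∃ m, n = m + 1 := ⟨n - 1, by omega⟩
    have h1 : (TT^[m+1] v) t = (TT^[m+1] v) (tau a t) := by
      rw [Function.iterate_succ_apply']; exact hTTtau _ t
    have h2 : (TT^[m+1] w) t = (TT^[m+1] w) (tau a t) := by
      rw [Function.iterate_succ_apply']; exact hTTtau _ t
    rw [Real.dist_eq, h1, h2]
    have hmem := tau_mem ha.le t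
    have hk := key (m+1) v w (tau a t) hmem
    refine hk.trans ?_
    have hle : (a - tau a t) ^ (m+1) ≤ a ^ (m+1) :=
      pow_le_pow_left₀ (by linarith [hmem.2]) (by linarith [hmem.1]) _
    have : L ^ (m+1) * (a - tau a t) ^ (m+1) ≤ (L*a) ^ (m+1) := by
      rw [mul_pow]
      exact mul_le_mul_of_nonneg_left hle (by positivity)
    have hfac : (0:ℝ) < (m+1).factorial := by positivity
    apply mul_le_mul_of_nonneg_right _ dist_nonneg
    have hfac' : (0:ℝ) < ((m+1).factorial : ℝ) := hfac
    rw [div_le_div_iff_of_pos_right hfac']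
    exact this
  -- find a contracting iterate
  obtain ⟨n, hKlt, hn1⟩ : ∃ n : ℕ, (L*a) ^ n / n.factorial < 1 ∧ 1 ≤ n := by
    have h := FloorSemiring.tendsto_pow_div_factorial_atTop (K := ℝ) (L*a)
    have h2 : ∀ᶠ n : ℕ in atTop, (L*a) ^ n / n.factorial < 1 :=
      h.eventually (gt_mem_nhds one_pos)
    exact (h2.and (eventually_ge_atTop 1)).exists
  set K : NNReal := ⟨(L*a) ^ n / n.factorial, by positivity⟩ with hKdef
  have hcontr : ContractingWith K (TT^[n]) := by
    constructor
    · rw [← NNReal.coe_lt_coe]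
      exact hKlt
    · apply LipschitzWith.of_dist_le_mul
      intro x y
      exact keydist n hn1 x y
  -- the fixed point
  set xstar : ℝ →ᵇ ℝ := ContractingWith.fixedPoint (TT^[n]) hcontr with hxsdef
  have hfix : Function.IsFixedPt TT xstar := hcontr.isFixedPt_fixedPoint_iterate
  have huniq : ∀ z : ℝ →ᵇ ℝ, Function.IsFixedPt TT z → z = xstar := fun z hz =>
    hcontr.fixedPoint_unique (hz.iterate n)
  have hx_eq : ∀ t, xstar t = (1/mφ) * ∫ u in tau a t..a, Gfun c M f (⇑xstar) u := by
    intro t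
    conv_lhs => rw [← hfix]
    exact hTTapp xstar t
  have hx_zero : ∀ t, a ≤ t → xstar t = 0 := by
    intro t hat
    rw [hx_eq t, tau_eq_right ha.le hat, intervalIntegral.integral_same, mul_zero]
  -- nonnegativity of the fixed point on `[0,a]`
  have hx_nonneg : ∀ t, t ∈ Icc 0 a → 0 ≤ xstar t := by
    intro t0 ht0
    by_contra hneg
    push_neg at hneg
    set S := {t | t ∈ Icc t0 a ∧ 0 ≤ xstar t} with hSdef
    have hSne : S.Nonempty := ⟨a, ⟨⟨ht0.2, le_rfl⟩, by rw [hx_zero a le_rfl]⟩⟩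
    have hSbdd : BddBelow S := ⟨t0, fun t ht => ht.1.1⟩
    have hSclosed : IsClosed S := by
      have : S = Icc t0 a ∩ (⇑xstar) ⁻¹' (Ici 0) := by
        ext u; simp [hSdef, mem_Icc, and_assoc]
      rw [this]
      exact isClosed_Icc.inter (isClosed_Ici.preimage xstar.continuous)
    set t1 := sInf S with ht1def
    have ht1S : t1 ∈ S := hSclosed.csInf_mem hSne hSbdd
    have ht01 : t0 < t1 := by
      rcases lt_or_eq_of_le ht1S.1.1 with h | h
      · exact h
      · exact absurd (h ▸ ht1S.2) (not_le.2 hneg)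
    have hneg_on : ∀ u, u ∈ Ico t0 t1 → xstar u < 0 := by
      intro u hu
      by_contra hge
      push_neg at hge
      have huS : u ∈ S := ⟨⟨hu.1, hu.2.le.trans ht1S.1.2⟩, hge⟩
      exact absurd (csInf_le hSbdd huS) (not_le.2 hu.2)
    have hint1 := hGint _ xstar.continuous.measurable t0 t1
    have hint2 := hGint _ xstar.continuous.measurable t1 a
    have hadd := intervalIntegral.integral_add_adjacent_intervals hint1 hint2
    have ht0mem : t0 ∈ Icc (0:ℝ) a := ht0
    have ht1mem : t1 ∈ Icc (0:ℝ) a := ⟨ht0.1.trans ht1S.1.1, ht1S.1.2⟩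
    have he0 : xstar t0 = (1/mφ) * ∫ u in t0..a, Gfun c M f (⇑xstar) u := by
      rw [hx_eq t0, tau_eq ht0mem]
    have he1 : xstar t1 = (1/mφ) * ∫ u in t1..a, Gfun c M f (⇑xstar) u := by
      rw [hx_eq t1, tau_eq ht1mem]
    have hI : (0:ℝ) ≤ ∫ u in t0..t1, Gfun c M f (⇑xstar) u := by
      rw [intervalIntegral.integral_of_le ht01.le]
      apply setIntegral_nonneg_ae measurableSet_Ioc
      have hae : ∀ᵐ u : ℝ, u ≠ t1 := by
        rw [ae_iff]
        have hset : {u : ℝ | ¬ u ≠ t1} = {t1} := by ext u; simp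
        rw [hset]
        exact measure_singleton t1
      filter_upwards [hae] with u hne hu
      have hu' : u ∈ Ico t0 t1 := ⟨hu.1.le, lt_of_le_of_ne hu.2 hne⟩
      have hx_lt := hneg_on u hu'
      unfold Gfun
      rw [clampTo_of_nonpos M _ hx_lt.le]
      simpa using hf0 u
    have hdecomp : xstar t0 = xstar t1 + (1/mφ) * ∫ u in t0..t1, Gfun c M f (⇑xstar) u := by
      rw [he0, he1, ← hadd]
      ring
    have : (0:ℝ) ≤ xstar t0 := by
      rw [hdecomp]
      exact add_nonneg ht1S.2 (mul_nonneg (by positivity) hI)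
    exact absurd this (not_le.2 hneg)
  -- upper bound of the fixed point
  have hintf : ∀ x y : ℝ, IntervalIntegrable f volume x y :=
    intervalIntegrable_of_bdd hfm habsf
  have hx_le : ∀ t, xstar t ≤ M := by
    intro t
    rw [hx_eq t]
    have hmem := tau_mem ha.le t
    have h1 : ∫ u in tau a t..a, Gfun c M f (⇑xstar) u ≤ ∫ u in tau a t..a, f u := by
      apply intervalIntegral.integral_mono_on hmem.2
        (hGint _ xstar.continuous.measurable _ _) (hintf _ _)
      intro u _
      unfold Gfun
      have : 0 ≤ c * clampTo M (xstar u) ^ 2 := by positivity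
      linarith
    have h2 : ∫ u in tau a t..a, f u ≤ ∫ _u in tau a t..a, B := by
      apply intervalIntegral.integral_mono_on hmem.2 (hintf _ _)
        intervalIntegrable_const
      intro u _
      exact hfB u
    have h3 : ∫ _u in tau a t..a, B = (a - tau a t) * B := by
      rw [intervalIntegral.integral_const, smul_eq_mul]
    have h4 : (a - tau a t) * B ≤ a * B := by
      nlinarith [hmem.1, hmem.2]
    have hfinal : ∫ u in tau a t..a, Gfun c M f (⇑xstar) u ≤ a * B := by linarith
    calc (1/mφ) * ∫ u in tau a t..a, Gfun c M f (⇑xstar) u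
        ≤ (1/mφ) * (a * B) := mul_le_mul_of_nonneg_left hfinal (by positivity)
      _ = M := by rw [hMdef]; field_simp
  have hclamp : ∀ u, u ∈ Icc (0:ℝ) a → clampTo M (xstar u) = xstar u := fun u hu =>
    clampTo_of_mem M _ (hx_nonneg u hu) (hx_le u)
  -- the canonical solution
  set V : ℝ → ℝ := fun t => if 0 ≤ t then xstar t else 0 with hVdef
  have hVm : Measurable V :=
    Measurable.ite measurableSet_Ici xstar.continuous.measurable measurable_const
  have hV0 : ∀ t, 0 ≤ V t := by
    intro t
    simp only [hVdef]
    split_ifs with h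
    · rcases le_or_gt t a with h2 | h2
      · exact hx_nonneg t ⟨h, h2⟩
      · rw [hx_zero t h2.le]
    · exact le_rfl
  have hVM : ∀ t, V t ≤ M := by
    intro t
    simp only [hVdef]
    split_ifs with h
    · exact hx_le t
    · exact hM
  have hVb : ∀ t, a < t → V t = 0 := by
    intro t hat
    simp only [hVdef]
    split_ifs with h
    · exact hx_zero t hat.le
    · rfl
  have hVneg : ∀ t, t < 0 → V t = 0 := by
    intro t ht
    simp only [hVdef]
    rw [if_neg (not_le.2 ht)]
  have hVbdd : ∀ u, |V u| ≤ M := fun u => by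
    rw [abs_of_nonneg (hV0 u)]; exact hVM u
  -- `V` satisfies the equation
  have hVeq : ∀ t ≥ (0:ℝ), V t = (1/mφ) * ∫ s in Ioi (0:ℝ),
      (f (t+s) - c * V (t+s) ^ 2) := by
    intro t ht
    set g : ℝ → ℝ := fun u => f u - c * V u ^ 2 with hgdef
    have hgm : Measurable g := hfm.sub (((hVm.pow_const 2)).const_mul c)
    have hgC : ∀ u, |g u| ≤ B + c * M ^ 2 := by
      intro u
      simp only [hgdef]
      have h1 := habsf u
      have h2 := hV0 u
      have h3 := hVM u
      have h4 : c * V u ^ 2 ≤ c * M ^ 2 :=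
        mul_le_mul_of_nonneg_left (pow_le_pow_left₀ h2 h3 2) hc.le
      have h5 : 0 ≤ c * V u ^ 2 := by positivity
      rw [abs_le]
      constructor <;> nlinarith [le_abs_self (f u), neg_abs_le (f u)]
    have hga : ∀ u, a < u → g u = 0 := by
      intro u hu
      simp only [hgdef]
      rw [hfa u hu, hVb u hu]
      ring
    have hshift : ∫ s in Ioi (0:ℝ), (f (t+s) - c * V (t+s) ^ 2)
        = ∫ u in Ioi t, g u := shift_integral g t
    rw [hshift]
    rcases le_or_gt t a with hta | hta
    · have htmem : t ∈ Icc (0:ℝ) a := ⟨ht, hta⟩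
      rw [cutoff_integral hta hga (integrableOn_Ioc_of_bdd hgm hgC t a)]
      have hcongr : ∫ u in t..a, g u = ∫ u in t..a, Gfun c M f (⇑xstar) u := by
        apply intervalIntegral.integral_congr
        intro u hu
        rw [uIcc_of_le hta] at hu
        have hu' : u ∈ Icc (0:ℝ) a := ⟨ht.trans hu.1, hu.2⟩
        simp only [hgdef]
        unfold Gfun
        rw [hclamp u hu']
        have hVu : V u = xstar u := by simp only [hVdef]; rw [if_pos hu'.1]
        rw [hVu]
      rw [hcongr]
      have hVt : V t = xstar t := by simp only [hVdef]; rw [if_pos ht]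
      rw [hVt, hx_eq t, tau_eq htmem]
    · rw [integral_Ioi_eq_zero hta.le hga, mul_zero, hVb t hta]
  -- uniqueness
  have huniqV : ∀ v : ℝ → ℝ,
      (Measurable v ∧ (∀ t, 0 ≤ v t) ∧ (∃ M, ∀ t, v t ≤ M) ∧
      (∃ b : ℝ, ∀ t, b < t → v t = 0) ∧ (∀ t < (0 : ℝ), v t = 0) ∧
      (∀ t ≥ (0 : ℝ), v t = (1 / mφ) * ∫ s in Set.Ioi (0 : ℝ),
        (f (t + s) - c * v (t + s) ^ 2))) → v = V := by
    rintro v hv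
    obtain ⟨hvm, hv0, ⟨M', hvM'⟩, ⟨b, hvb⟩, hvneg, heq⟩ := hv
    have va : ∀ t, a < t → v t = 0 :=
      vanish v ⟨hvm, hv0, ⟨M', hvM'⟩, ⟨b, hvb⟩, hvneg, heq⟩
    have hM' : 0 ≤ M' := (hv0 0).trans (hvM' 0)
    set g : ℝ → ℝ := fun u => f u - c * v u ^ 2 with hgdef
    set Cg : ℝ := B + c * M' ^ 2 with hCgdef
    have hgm : Measurable g := hfm.sub ((hvm.pow_const 2).const_mul c)
    have hgC : ∀ u, |g u| ≤ Cg := by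
      intro u
      simp only [hgdef, hCgdef]
      have h1 := habsf u
      have h4 : c * v u ^ 2 ≤ c * M' ^ 2 :=
        mul_le_mul_of_nonneg_left (pow_le_pow_left₀ (hv0 u) (hvM' u) 2) hc.le
      have h5 : 0 ≤ c * v u ^ 2 := by positivity
      rw [abs_le]
      constructor <;> nlinarith [le_abs_self (f u), neg_abs_le (f u)]
    have hga : ∀ u, a < u → g u = 0 := by
      intro u hu
      simp only [hgdef]
      rw [hfa u hu, va u hu]
      ring
    have hvrep : ∀ t, t ∈ Icc (0:ℝ) a → v t = (1/mφ) * ∫ u in t..a, g u := by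
      intro t ht
      rw [heq t ht.1]
      have hs : ∫ s in Ioi (0:ℝ), (f (t+s) - c * v (t+s) ^ 2)
          = ∫ u in Ioi t, g u := shift_integral g t
      rw [hs, cutoff_integral ht.2 hga (integrableOn_Ioc_of_bdd hgm hgC t a)]
    have hvleM : ∀ t, t ∈ Icc (0:ℝ) a → v t ≤ M := by
      intro t ht
      rw [hvrep t ht]
      have h1 : ∫ u in t..a, g u ≤ ∫ u in t..a, f u := by
        apply intervalIntegral.integral_mono_on ht.2
          (intervalIntegrable_of_bdd hgm hgC t a) (hintf _ _)
        intro u _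
        simp only [hgdef]
        have : 0 ≤ c * v u ^ 2 := by positivity
        linarith
      have h2 : ∫ u in t..a, f u ≤ ∫ _u in t..a, B := by
        apply intervalIntegral.integral_mono_on ht.2 (hintf _ _)
          intervalIntegrable_const
        intro u _
        exact hfB u
      have h3 : ∫ _u in t..a, B = (a - t) * B := by
        rw [intervalIntegral.integral_const, smul_eq_mul]
      have h4 : (a - t) * B ≤ a * B := by nlinarith [ht.1, ht.2]
      have hfinal : ∫ u in t..a, g u ≤ a * B := by linarith
      calc (1/mφ) * ∫ u in t..a, g u
          ≤ (1/mφ) * (a * B) := mul_le_mul_of_nonneg_left hfinal (by positivity)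
        _ = M := by rw [hMdef]; field_simp
    -- the bounded continuous representative of `v`
    let w : ℝ →ᵇ ℝ := BoundedContinuousFunction.ofNormedAddCommGroup
      (fun t => (1/mφ) * ∫ u in tau a t..a, g u) (hcont' g Cg hgm hgC)
      ((1/mφ) * (Cg * a)) (hbd' g Cg hgC)
    have hwapp : ∀ t, w t = (1/mφ) * ∫ u in tau a t..a, g u := fun t => rfl
    have hw_eqv : ∀ t, t ∈ Icc (0:ℝ) a → w t = v t := by
      intro t ht
      rw [hwapp, tau_eq ht, ← hvrep t ht]
    have hwfix : Function.IsFixedPt TT w := by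
      show TT w = w
      ext t
      rw [hTTapp, hwapp]
      congr 1
      apply intervalIntegral.integral_congr
      intro u hu
      rw [uIcc_of_le (tau_mem ha.le t).2] at hu
      have hu' : u ∈ Icc (0:ℝ) a := ⟨(tau_mem ha.le t).1.trans hu.1, hu.2⟩
      unfold Gfun
      simp only [hgdef]
      rw [hw_eqv u hu', clampTo_of_mem M _ (hv0 u) (hvleM u hu')]
    have hwx : w = xstar := huniq w hwfix
    funext t
    rcases lt_or_ge t 0 with h | h
    · rw [hvneg t h, hVneg t h]
    · rcases le_or_gt t a with h2 | h2
      · have hvw : v t = w t := (hw_eqv t ⟨h, h2⟩).symm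
        rw [hvw, hwx]
        simp only [hVdef]
        rw [if_pos h]
      · rw [va t h2, hVb t h2]
  exact ⟨⟨V, ⟨hVm, hV0, ⟨M, hVM⟩, ⟨a, hVb⟩, hVneg, hVeq⟩, huniqV⟩, vanish⟩

end Master


/-- for `m_φ > 0`, `σ > 0` and a nonnegative step function
`f = ∑_{k=1}^m θ_k 1_{[0,t_k]}`, the equation
`v(t) = (1/m_φ) ∫_0^∞ (f(t+s) - (σ²/2) v(t+s)²) ds` (for `t ≥ 0`) has exactly
one bounded nonnegative Borel solution with compact support (solutions on
`[0,∞)` identified with their extension by `0`); moreover this solution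
vanishes outside `[0,a]`, `a = max_k t_k`. -/
theorem stmt17
    (mφ σ : ℝ) (hmφ : 0 < mφ) (hσ : 0 < σ)
    (m : ℕ) (hm : 0 < m) (θ tk : ℕ → ℝ)
    (hθ : ∀ k < m, 0 ≤ θ k) (htk : ∀ k < m, 0 < tk k)
    (a : ℝ) (ha_mem : ∃ k < m, tk k = a) (ha_max : ∀ k < m, tk k ≤ a)
    (f : ℝ → ℝ)
    (hf : ∀ t, f t = ∑ k ∈ Finset.range m,
      Set.indicator (Icc (0 : ℝ) (tk k)) (fun _ => θ k) t) :
    (∃! v : ℝ → ℝ,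
      Measurable v ∧ (∀ t, 0 ≤ v t) ∧ (∃ M, ∀ t, v t ≤ M) ∧
      (∃ b : ℝ, ∀ t, b < t → v t = 0) ∧ (∀ t < (0 : ℝ), v t = 0) ∧
      (∀ t ≥ (0 : ℝ), v t = (1 / mφ) * ∫ s in Set.Ioi (0 : ℝ),
        (f (t + s) - σ ^ 2 / 2 * v (t + s) ^ 2))) ∧
    (∀ v : ℝ → ℝ,
      (Measurable v ∧ (∀ t, 0 ≤ v t) ∧ (∃ M, ∀ t, v t ≤ M) ∧
      (∃ b : ℝ, ∀ t, b < t → v t = 0) ∧ (∀ t < (0 : ℝ), v t = 0) ∧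
      (∀ t ≥ (0 : ℝ), v t = (1 / mφ) * ∫ s in Set.Ioi (0 : ℝ),
        (f (t + s) - σ ^ 2 / 2 * v (t + s) ^ 2))) →
      ∀ t, a < t → v t = 0) := by
  have ha0 : 0 < a := by
    obtain ⟨k, hk, hka⟩ := ha_mem
    exact hka ▸ htk k hk
  set B : ℝ := ∑ k ∈ Finset.range m, θ k with hBdef
  have hB : 0 ≤ B := Finset.sum_nonneg fun k hk => hθ k (Finset.mem_range.mp hk)
  have hfm : Measurable f := by
    have hfe : f = fun t => ∑ k ∈ Finset.range m,
        Set.indicator (Icc (0 : ℝ) (tk k)) (fun _ => θ k) t := funext hf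
    rw [hfe]
    apply Finset.measurable_sum
    intro k _
    exact measurable_const.indicator measurableSet_Icc
  have hf0 : ∀ u, 0 ≤ f u := by
    intro u
    rw [hf u]
    apply Finset.sum_nonneg
    intro k hk
    exact Set.indicator_nonneg (fun _ _ => hθ k (Finset.mem_range.mp hk)) u
  have hfB : ∀ u, f u ≤ B := by
    intro u
    rw [hf u, hBdef]
    apply Finset.sum_le_sum
    intro k hk
    rw [Set.indicator_apply]
    split_ifs with h
    · exact le_rfl
    · exact hθ k (Finset.mem_range.mp hk)
  have hfa : ∀ u, a < u → f u = 0 := by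
    intro u hu
    rw [hf u]
    apply Finset.sum_eq_zero
    intro k hk
    apply Set.indicator_of_notMem
    intro hmem
    exact absurd hmem.2 (not_le.2 (lt_of_le_of_lt (ha_max k (Finset.mem_range.mp hk)) hu))
  exact stmt17_master mφ (σ ^ 2 / 2) a B hmφ (by positivity) ha0 hB f hfm hf0 hfB hfa
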